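/- Let u be a solution of the Schrödinger evolution on a web-like graph. Set 𝓕 = F ∪ {ν_j(1) : 1 ≤ j ≤ N}, regarded as a graph with an edge (α,β) iff α ≠ β and L(α,β) ≠ 0. Let B ⊆ 𝓕 and put B′ = B ∖ {ν_j(1) : ν_j(1) ∈ B and ν_j(0) ∉ B}. If [B′] = 𝓕 and u(t,β) = 0 for all β ∈ B′ and all t ∈ [0,1], then u(t,α) = 0 for all α ∈ A and all t ∈ [0,1]. -/

import Mathlib

open Set

/-- A one-step extension of `B` within the ground vertex set `G`:
`B' = B ∪ {α}` where, for some `β ∈ B`, `α` is the unique vertex of `G` outside `B`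
joined to `β` by an edge. -/
def OneStepExt {V : Type*} (G : Set V) (adj : V → V → Prop) (B B' : Set V) : Prop :=
  ∃ α ∈ G \ B, ∃ β ∈ B, adj β α ∧ (∀ γ ∈ G \ B, adj β γ → γ = α) ∧ B' = insert α B

/-- uniqueness from an extendable zero set on the inner part of a
web-like graph (setup exactly as in Statement 0).

Put `𝓕 = F ∪ {ν_j(1) : j}`, with the graph structure `(α,β)` an edge iff `α ≠ β` and
`L(α,β) ≠ 0`.  For `B ⊆ 𝓕` put `B' = B ∖ {ν_j(1) : ν_j(1) ∈ B, ν_j(0) ∉ B}`.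
If `[B'] = 𝓕` (expressed as: some chain of one-step extensions inside `𝓕` leads from
`B'` to `𝓕`, which is automatically maximal) and `u` vanishes on `B'` for all
`t ∈ [0,1]`, then `u` vanishes identically on `A` for all `t ∈ [0,1]`. -/
noncomputable def lpEvalCLM (ι : Type*) (i : ι) : lp (fun _ : ι => ℂ) 2 →L[ℂ] ℂ :=
  LinearMap.mkContinuous
    { toFun := fun f => f i
      map_add' := fun f g => by simp [lp.coeFn_add]
      map_smul' := fun c f => by simp [lp.coeFn_smul] }
    1 (fun f => by rw [one_mul]; exact lp.norm_apply_le_norm (by norm_num) f i)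


theorem stmt_1
    {F : Type*} [Fintype F] {N : ℕ} (hN : 1 ≤ N)
    (endpt : Fin N → F)
    (ν : Fin N → ℕ → (F ⊕ (Fin N × ℕ)))
    (hν0 : ∀ j, ν j 0 = Sum.inl (endpt j))
    (hνS : ∀ j k, ν j (k + 1) = Sum.inr (j, k))
    (L : (F ⊕ (Fin N × ℕ)) → (F ⊕ (Fin N × ℕ)) → ℝ)
    (hsymm : ∀ a b, L a b = L b a)
    (hpos : ∀ x : (F ⊕ (Fin N × ℕ)) →₀ ℝ,
      0 ≤ ∑ a ∈ x.support, ∑ b ∈ x.support, x a * L a b * x b)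
    (hbdd : ∃ Cb : ℝ, ∀ x : (F ⊕ (Fin N × ℕ)) →₀ ℝ,
      |∑ a ∈ x.support, ∑ b ∈ x.support, x a * L a b * x b|
        ≤ Cb * ∑ a ∈ x.support, x a ^ 2)
    (hchan0 : ∀ j k n, 1 < Nat.dist k n → L (ν j k) (ν j n) = 0)
    (hchan1 : ∀ j k, L (ν j k) (ν j (k + 1)) ≠ 0)
    (hchan2 : ∀ j j' k n, j ≠ j' → 1 ≤ k → 1 ≤ n → L (ν j k) (ν j' n) = 0)
    (hinner : ∀ (α : F) j k, 1 ≤ k → ¬(k = 1 ∧ α = endpt j) →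
      L (Sum.inl α) (ν j k) = 0)
    (hfree : ∃ K₀ : ℕ, 0 < K₀ ∧ ∀ j k, K₀ ≤ k →
      L (ν j k) (ν j k) = 2 ∧ L (ν j k) (ν j (k + 1)) = -1)
    (u w : ℝ → lp (fun _ : F ⊕ (Fin N × ℕ) => ℂ) 2)
    (hw : ∀ t ∈ Icc (0:ℝ) 1, ∀ a, w t a = Complex.I * ∑' b, (L a b : ℂ) * u t b)
    (hderiv : ∀ t ∈ Icc (0:ℝ) 1, HasDerivWithinAt u (w t) (Icc (0:ℝ) 1) t)
    (hwcont : ContinuousOn w (Icc (0:ℝ) 1))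
    (B B' : Set (F ⊕ (Fin N × ℕ)))
    (hB : B ⊆ Set.range (Sum.inl : F → F ⊕ (Fin N × ℕ)) ∪ Set.range fun j => ν j 1)
    (hB' : B' = B \ {x | ∃ j, x = ν j 1 ∧ ν j 1 ∈ B ∧ ν j 0 ∉ B})
    (hext : Relation.ReflTransGen
      (OneStepExt (Set.range (Sum.inl : F → F ⊕ (Fin N × ℕ)) ∪ Set.range fun j => ν j 1)
        (fun a b => a ≠ b ∧ L a b ≠ 0))
      B' (Set.range (Sum.inl : F → F ⊕ (Fin N × ℕ)) ∪ Set.range fun j => ν j 1))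
    (hvanish : ∀ β ∈ B', ∀ t ∈ Icc (0:ℝ) 1, u t β = 0) :
    ∀ t ∈ Icc (0:ℝ) 1, ∀ a, u t a = 0 := by

  -- notation
  have key : ∀ β : F ⊕ (Fin N × ℕ), (∀ t ∈ Icc (0:ℝ) 1, u t β = 0) →
      ∀ t ∈ Icc (0:ℝ) 1, (∑' b, (L β b : ℂ) * u t b) = 0 := by
    intro β hβ t ht
    have hd : HasDerivWithinAt (fun τ => u τ β) (w t β) (Icc (0:ℝ) 1) t :=
      ((lpEvalCLM (F ⊕ (Fin N × ℕ)) β).restrictScalars ℝ).hasFDerivAt.comp_hasDerivWithinAt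
        t (hderiv t ht)
    have hd0 : HasDerivWithinAt (fun τ => u τ β) 0 (Icc (0:ℝ) 1) t :=
      (hasDerivWithinAt_const t _ (0:ℂ)).congr (fun y hy => (hβ y hy)) (hβ t ht)
    have hu : UniqueDiffWithinAt ℝ (Icc (0:ℝ) 1) t := (uniqueDiffOn_Icc one_pos) t ht
    have hwβ : w t β = 0 := by
      have h1 := hd.derivWithin hu
      have h2 := hd0.derivWithin hu
      rw [h1] at h2; exact h2
    rw [hw t ht β] at hwβ
    rcases mul_eq_zero.mp hwβ with h | h
    · exact absurd h Complex.I_ne_zero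
    · exact h
  have chan : ∀ (j : Fin N) (k : ℕ), (∀ t ∈ Icc (0:ℝ) 1, u t (ν j k) = 0) →
      (∀ t ∈ Icc (0:ℝ) 1, u t (ν j (k+1)) = 0) →
      ∀ t ∈ Icc (0:ℝ) 1, u t (ν j (k+2)) = 0 := by
    intro j k hk h1 t ht
    have h0 := key (ν j (k+1)) h1 t ht
    have hsingle : (∑' b, (L (ν j (k+1)) b : ℂ) * u t b)
        = (L (ν j (k+1)) (ν j (k+2)) : ℂ) * u t (ν j (k+2)) := by
      apply tsum_eq_single
      intro b hb
      rcases b with f | ⟨j', n⟩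
      · by_cases hc : k + 1 = 1 ∧ f = endpt j
        · have hk0 : k = 0 := by omega
          subst hk0
          have hfν : Sum.inl f = ν j 0 := by rw [hν0, hc.2]
          rw [hfν, hk t ht, mul_zero]
        · rw [hsymm, hinner f j (k+1) (by omega) hc, Complex.ofReal_zero, zero_mul]
      · rw [← hνS j' n]
        by_cases hj : j' = j
        · subst hj
          by_cases hdist : 1 < Nat.dist (k+1) (n+1)
          · rw [hchan0 j' (k+1) (n+1) hdist, Complex.ofReal_zero, zero_mul]
          · have hne : n ≠ k + 1 := by
              intro h; apply hb; rw [hνS, h, ← hνS]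
            have hcase : n + 1 = k ∨ n + 1 = k + 1 := by
              simp only [Nat.dist] at hdist; omega
            rcases hcase with h | h
            · rw [h, hk t ht, mul_zero]
            · rw [h, h1 t ht, mul_zero]
        · rw [hchan2 j j' (k+1) (n+1) (fun hh => hj hh.symm) (by omega) (by omega),
            Complex.ofReal_zero, zero_mul]
    rw [hsingle] at h0
    rcases mul_eq_zero.mp h0 with h | h
    · exact absurd h (by exact_mod_cast hchan1 j (k+1))
    · exact h
  have chanAll : ∀ (j : Fin N), (∀ t ∈ Icc (0:ℝ) 1, u t (ν j 0) = 0) →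
      (∀ t ∈ Icc (0:ℝ) 1, u t (ν j 1) = 0) →
      ∀ k, ∀ t ∈ Icc (0:ℝ) 1, u t (ν j k) = 0 := by
    intro j h0 h1 k
    induction k using Nat.twoStepInduction with
    | zero => exact h0
    | one => exact h1
    | more k ih1 ih2 => exact chan j k ih1 ih2
  -- the invariant
  have step : ∀ S S' : Set (F ⊕ (Fin N × ℕ)),
      (S ⊆ (Set.range (Sum.inl : F → F ⊕ (Fin N × ℕ)) ∪ Set.range fun j => ν j 1) ∧
        (∀ b ∈ S, ∀ t ∈ Icc (0:ℝ) 1, u t b = 0) ∧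
        ∀ j, ν j 1 ∈ S → ∀ t ∈ Icc (0:ℝ) 1, u t (ν j 0) = 0) →
      OneStepExt (Set.range (Sum.inl : F → F ⊕ (Fin N × ℕ)) ∪ Set.range fun j => ν j 1)
        (fun a b => a ≠ b ∧ L a b ≠ 0) S S' →
      (S' ⊆ (Set.range (Sum.inl : F → F ⊕ (Fin N × ℕ)) ∪ Set.range fun j => ν j 1) ∧
        (∀ b ∈ S', ∀ t ∈ Icc (0:ℝ) 1, u t b = 0) ∧
        ∀ j, ν j 1 ∈ S' → ∀ t ∈ Icc (0:ℝ) 1, u t (ν j 0) = 0) := by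
    rintro S S' ⟨hSF, hSZ, hS1⟩ ⟨α, ⟨hαF, hαS⟩, β, hβS, ⟨hne, hLβα⟩, huniq, rfl⟩
    have hβZ := hSZ β hβS
    have hterm : ∀ t ∈ Icc (0:ℝ) 1, ∀ b, b ≠ α → (L β b : ℂ) * u t b = 0 := by
      intro t ht b hb
      by_cases hLb : L β b = 0
      · rw [hLb, Complex.ofReal_zero, zero_mul]
      by_cases hbβ : b = β
      · rw [hbβ, hβZ t ht, mul_zero]
      have hmain : b ∈ (Set.range (Sum.inl : F → F ⊕ (Fin N × ℕ))
          ∪ Set.range fun j => ν j 1) ∨ u t b = 0 := by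
        rcases hSF hβS with ⟨f, hf⟩ | ⟨j, hj⟩
        · left
          rcases b with f' | ⟨j', n⟩
          · exact Set.mem_union_left _ ⟨f', rfl⟩
          · rw [← hf, ← hνS j' n] at hLb
            by_cases hc : n + 1 = 1 ∧ f = endpt j'
            · have hn0 : n = 0 := by omega
              subst hn0
              exact Set.mem_union_right _ ⟨j', (hνS j' 0).symm ▸ rfl⟩
            · exact absurd (hinner f j' (n+1) (by omega) hc) hLb
        · have hj' : ν j 1 = β := hj
          rcases b with f' | ⟨j', n⟩
          · exact Or.inl (Set.mem_union_left _ ⟨f', rfl⟩)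
          · rw [← hj', ← hνS j' n] at hLb
            by_cases hjj : j' = j
            · subst hjj
              right
              have hn : n ≠ 0 := by
                intro h; subst h
                exact hbβ (by rw [← hj', hνS j' 0])
              have hd : ¬ 1 < Nat.dist 1 (n+1) := fun h => hLb (hchan0 j' 1 (n+1) h)
              have hn1 : n = 1 := by simp only [Nat.dist] at hd; omega
              subst hn1
              have h0Z : ∀ t ∈ Icc (0:ℝ) 1, u t (ν j' 0) = 0 := hS1 j' (hj' ▸ hβS)
              have h1Z : ∀ t ∈ Icc (0:ℝ) 1, u t (ν j' 1) = 0 := fun s hs => hj' ▸ hβZ s hs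
              have h2Z := chan j' 0 h0Z h1Z t ht
              rw [← hνS j' 1]
              exact h2Z
            · exact absurd (hchan2 j j' 1 (n+1) (fun hh => hjj hh.symm) le_rfl (by omega)) hLb
      rcases hmain with hbF | hb0
      · by_cases hbS : b ∈ S
        · rw [hSZ b hbS t ht, mul_zero]
        · exact absurd (huniq b ⟨hbF, hbS⟩ ⟨fun h => hbβ h.symm, hLb⟩) hb
      · rw [hb0, mul_zero]
    have hαZ : ∀ t ∈ Icc (0:ℝ) 1, u t α = 0 := by
      intro t ht
      have h0 := key β hβZ t ht
      rw [tsum_eq_single α (hterm t ht)] at h0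
      rcases mul_eq_zero.mp h0 with h | h
      · exact absurd h (by exact_mod_cast hLβα)
      · exact h
    refine ⟨insert_subset hαF hSF, ?_, ?_⟩
    · intro b hb
      rcases hb with hb | hb
      · exact hb ▸ hαZ
      · exact hSZ b hb
    · intro j hj
      rcases hj with hj | hjS
      · rcases hSF hβS with ⟨f, hf⟩ | ⟨j', hj'⟩
        · have hL : L (Sum.inl f) (ν j 1) ≠ 0 := by rw [hf, hj]; exact hLβα
          by_cases hc : (1:ℕ) = 1 ∧ f = endpt j
          · have hν0β : ν j 0 = β := by rw [hν0, ← hc.2]; exact hf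
            rw [hν0β]; exact hβZ
          · exact absurd (hinner f j 1 le_rfl hc) hL
        · have hj'' : ν j' 1 = β := hj'
          have hjj : j' ≠ j := by
            intro h; apply hne; rw [← hj'', h, hj]
          exact absurd (hj'' ▸ hj ▸ hchan2 j' j 1 1 hjj le_rfl le_rfl) hLβα
      · exact hS1 j hjS
  have hbase : B' ⊆ (Set.range (Sum.inl : F → F ⊕ (Fin N × ℕ)) ∪ Set.range fun j => ν j 1) ∧
      (∀ b ∈ B', ∀ t ∈ Icc (0:ℝ) 1, u t b = 0) ∧
      ∀ j, ν j 1 ∈ B' → ∀ t ∈ Icc (0:ℝ) 1, u t (ν j 0) = 0 := by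
    have hB'B : B' ⊆ B := by rw [hB']; exact diff_subset
    refine ⟨hB'B.trans hB, fun b hb => hvanish b hb, ?_⟩
    intro j hj
    have hjB' := hj
    rw [hB'] at hj
    have h0B : ν j 0 ∈ B := by
      by_contra h0
      exact hj.2 ⟨j, rfl, hB'B hjB', h0⟩
    have h0B' : ν j 0 ∈ B' := by
      rw [hB']
      refine ⟨h0B, ?_⟩
      rintro ⟨j', hj', -⟩
      rw [hν0, hνS] at hj'
      exact Sum.inl_ne_inr hj'
    exact hvanish _ h0B'
  have hall : ∀ S, Relation.ReflTransGen
      (OneStepExt (Set.range (Sum.inl : F → F ⊕ (Fin N × ℕ)) ∪ Set.range fun j => ν j 1)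
        (fun a b => a ≠ b ∧ L a b ≠ 0)) B' S →
      (S ⊆ (Set.range (Sum.inl : F → F ⊕ (Fin N × ℕ)) ∪ Set.range fun j => ν j 1) ∧
        (∀ b ∈ S, ∀ t ∈ Icc (0:ℝ) 1, u t b = 0) ∧
        ∀ j, ν j 1 ∈ S → ∀ t ∈ Icc (0:ℝ) 1, u t (ν j 0) = 0) := by
    intro S hS
    induction hS with
    | refl => exact hbase
    | tail _ h ih => exact step _ _ ih h
  have hfinal := hall _ hext
  intro t ht a
  rcases a with f | ⟨j, k⟩
  · exact hfinal.2.1 _ (Set.mem_union_left _ ⟨f, rfl⟩) t ht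
  · have h1F : ν j 1 ∈ (Set.range (Sum.inl : F → F ⊕ (Fin N × ℕ))
        ∪ Set.range fun j => ν j 1) := Set.mem_union_right _ ⟨j, rfl⟩
    have := chanAll j (hfinal.2.2 j h1F) (hfinal.2.1 _ h1F) (k+1)
    rw [← hνS j k]
    exact this t ht
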